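/- Let x, α, β be, respectively, a real number and two complex numbers with x² + |α|² + |β|² = 1, and let p be (1/2) times the 4×4 complex matrix with rows (1+x, 0, α, β), (0, 1+x, -β̄, ᾱ), (ᾱ, -β, 1-x, 0), (β̄, α, 0, 1-x). Then p is a self-adjoint idempotent of trace 2 and rank 2. -/

import Mathlib

open Matrix

lemma rank_eq_trace_aux {n : ℕ} (p : Matrix (Fin n) (Fin n) ℂ) (h : p * p = p) :
    (p.rank : ℂ) = p.trace := by
  have hproj : LinearMap.IsProj (LinearMap.range p.mulVecLin) p.mulVecLin := by
    constructor
    · intro x; exact LinearMap.mem_range_self _ x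
    · rintro x ⟨y, rfl⟩
      rw [← LinearMap.comp_apply, ← Matrix.mulVecLin_mul, h]
  have ht := hproj.trace
  have htr : LinearMap.trace ℂ (Fin n → ℂ) p.mulVecLin = p.trace := by
    rw [LinearMap.trace_eq_matrix_trace ℂ (Pi.basisFun ℂ (Fin n)),
      LinearMap.toMatrix_eq_toMatrix']
    congr 1
    rw [← Matrix.toLin'_apply', LinearMap.toMatrix'_toLin']
  rw [Matrix.rank, ← htr, ht]

/-- The matrix `p` built from a point `(x, α, β)` of the 4-sphere is a
self-adjoint idempotent of trace 2 and rank 2. -/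
theorem stmt11 (x : ℝ) (α β : ℂ)
    (h : (x : ℝ) ^ 2 + ‖α‖ ^ 2 + ‖β‖ ^ 2 = 1)
    (p : Matrix (Fin 4) (Fin 4) ℂ)
    (hp : p = (1 / 2 : ℂ) •
      !![1 + (x : ℂ), 0, α, β;
         0, 1 + (x : ℂ), -star β, star α;
         star α, -β, 1 - (x : ℂ), 0;
         star β, α, 0, 1 - (x : ℂ)]) :
    pᴴ = p ∧ p * p = p ∧ p.trace = 2 ∧ p.rank = 2 := by
  have hkey : α * (starRingEnd ℂ) α + β * (starRingEnd ℂ) β = 1 - (x : ℂ) ^ 2 := by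
    rw [Complex.mul_conj, Complex.mul_conj]
    have : (Complex.normSq α : ℝ) = ‖α‖ ^ 2 := by
      rw [Complex.sq_norm]
    have hb : (Complex.normSq β : ℝ) = ‖β‖ ^ 2 := by
      rw [Complex.sq_norm]
    rw [← Complex.ofReal_add]
    rw [this, hb]
    have : ‖α‖ ^ 2 + ‖β‖ ^ 2 = 1 - x ^ 2 := by linarith
    rw [this]
    push_cast
    ring
  have hH : pᴴ = p := by
    subst hp
    ext i j
    fin_cases i <;> fin_cases j <;>
      simp [Matrix.conjTranspose_apply, Complex.conj_ofReal]
  have hmul : p * p = p := by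
    subst hp
    ext i j
    fin_cases i <;> fin_cases j <;>
      simp [Matrix.mul_apply, Fin.sum_univ_four] <;> ring_nf <;>
      simp [Complex.conj_ofReal] <;> linear_combination (1/4 : ℂ) * hkey
  have htrace : p.trace = 2 := by
    subst hp
    simp [Matrix.trace, Fin.sum_univ_four, Matrix.diag]
    ring
  have hrank : p.rank = 2 := by
    have := rank_eq_trace_aux p hmul
    rw [htrace] at this
    exact_mod_cast this
  exact ⟨hH, hmul, htrace, hrank⟩
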